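/- Define P(Δ) = 2(1−Δ)²·(∫_0^{√(ln(1/(1−Δ)))} exp(u²) du)² / (Δ(2−Δ)) for 0 < Δ ≤ 1/2. Then P is strictly decreasing on (0, 1/2], P(Δ) → 1 as Δ → 0⁺, and P(1/2) = (π/6)·erfi(√(ln 2))². -/

import Mathlib

open Real Set

noncomputable def II (y : ℝ) : ℝ := ∫ u in (0:ℝ)..y, Real.exp (u ^ 2)

lemma contExp : Continuous fun u : ℝ => Real.exp (u ^ 2) := by continuity

lemma hasDerivAt_II (y : ℝ) : HasDerivAt II (Real.exp (y ^ 2)) y :=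
  (contExp.integral_hasStrictDerivAt 0 y).hasDerivAt

lemma continuous_II : Continuous II := continuous_iff_continuousAt.mpr fun x => (hasDerivAt_II x).continuousAt

lemma II_ge {y : ℝ} (hy : 0 ≤ y) : y ≤ II y := by
  have : ∫ u in (0:ℝ)..y, (1:ℝ) ≤ II y := by
    apply intervalIntegral.integral_mono_on hy intervalIntegrable_const
      (contExp.intervalIntegrable _ _)
    intro u _
    exact Real.one_le_exp (sq_nonneg u)
  simpa using this

lemma II_le {y : ℝ} (hy : 0 ≤ y) : II y ≤ y * Real.exp (y ^ 2) := by
  have : II y ≤ ∫ u in (0:ℝ)..y, Real.exp (y ^ 2) := by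
    apply intervalIntegral.integral_mono_on hy (contExp.intervalIntegrable _ _)
      intervalIntegrable_const
    intro u hu
    exact Real.exp_le_exp.mpr (by nlinarith [hu.1, hu.2])
  simpa using this

lemma II_pos {y : ℝ} (hy : 0 < y) : 0 < II y := lt_of_lt_of_le hy (II_ge hy.le)

lemma key {t : ℝ} (ht : 0 < t) :
    Real.exp (t ^ 2) - Real.exp (-(t ^ 2)) < 2 * t * II t := by
  set f : ℝ → ℝ := fun y => 2 * y * II y - Real.exp (y ^ 2) + Real.exp (-(y ^ 2)) with hf
  have hderiv : ∀ y : ℝ, HasDerivAt f (2 * II y - 2 * y * Real.exp (-(y ^ 2))) y := by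
    intro y
    have h1 : HasDerivAt (fun y : ℝ => 2 * y * II y)
        (2 * II y + 2 * y * Real.exp (y ^ 2)) y := by
      have := ((hasDerivAt_id y).const_mul 2).mul (hasDerivAt_II y)
      exact this.congr_deriv (by simp only [id]; ring)
    have h2 : HasDerivAt (fun y : ℝ => Real.exp (y ^ 2)) (Real.exp (y ^ 2) * (2 * y)) y := by
      have hy : HasDerivAt (fun y : ℝ => y ^ 2) (2 * y) y := by
        simpa using hasDerivAt_pow 2 y
      exact (Real.hasDerivAt_exp _).comp y hy
    have h3 : HasDerivAt (fun y : ℝ => Real.exp (-(y ^ 2)))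
        (Real.exp (-(y ^ 2)) * (-(2 * y))) y := by
      have hy : HasDerivAt (fun y : ℝ => -(y ^ 2)) (-(2 * y)) y := by
        exact (hasDerivAt_pow 2 y).neg.congr_deriv (by norm_num)
      exact (Real.hasDerivAt_exp _).comp y hy
    have := (h1.sub h2).add h3
    refine this.congr_deriv ?_
    ring
  have hmono : StrictMonoOn f (Ici 0) := by
    apply strictMonoOn_of_deriv_pos (convex_Ici 0)
    · exact Continuous.continuousOn (by
        have : Continuous f := by
          exact continuous_iff_continuousAt.mpr fun x => (hderiv x).continuousAt
        exact this)
    · intro x hx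
      rw [interior_Ici] at hx
      rw [(hderiv x).deriv]
      have hx' : 0 < x := hx
      have h1 : x ≤ II x := II_ge hx'.le
      have h2 : Real.exp (-(x ^ 2)) < 1 := by
        rw [Real.exp_lt_one_iff]
        nlinarith
      nlinarith [mul_lt_mul_of_pos_left h2 hx']
  have h0 : f 0 = 0 := by simp [hf, II]
  have := hmono (self_mem_Ici) (mem_Ici.mpr ht.le) ht
  rw [h0] at this
  simp only [hf] at this
  linarith

noncomputable def QQ (t : ℝ) : ℝ := 2 * (II t) ^ 2 / (Real.exp (2 * t ^ 2) - 1)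

lemma Dpos {t : ℝ} (ht : 0 < t) : 0 < Real.exp (2 * t ^ 2) - 1 := by
  nlinarith [Real.add_one_le_exp (2 * t ^ 2), mul_pos ht ht, sq_abs t, sq_nonneg t, ht.le, mul_self_pos.mpr ht.ne']

lemma hasDerivAt_QQ {t : ℝ} (ht : 0 < t) :
    HasDerivAt QQ ((4 * II t * Real.exp (t ^ 2) * (Real.exp (2 * t ^ 2) - 1)
      - 2 * (II t) ^ 2 * (Real.exp (2 * t ^ 2) * (4 * t)))
      / (Real.exp (2 * t ^ 2) - 1) ^ 2) t := by
  have hN : HasDerivAt (fun t => 2 * (II t) ^ 2) (4 * II t * Real.exp (t ^ 2)) t := by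
    have := ((hasDerivAt_II t).pow 2).const_mul 2
    refine this.congr_deriv ?_
    ring
  have hD : HasDerivAt (fun t : ℝ => Real.exp (2 * t ^ 2) - 1)
      (Real.exp (2 * t ^ 2) * (4 * t)) t := by
    have hy : HasDerivAt (fun t : ℝ => 2 * t ^ 2) (2 * (2 * t)) t := by
      simpa using (hasDerivAt_pow 2 t).const_mul 2
    have := ((Real.hasDerivAt_exp _).comp t hy).sub_const 1
    refine this.congr_deriv ?_
    ring
  exact hN.div hD (Dpos ht).ne'

lemma QQ_strictAnti : StrictAntiOn QQ (Ioi 0) := by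
  apply strictAntiOn_of_deriv_neg (convex_Ioi 0)
  · intro x hx
    exact ((hasDerivAt_QQ hx).continuousAt).continuousWithinAt
  · intro x hx
    rw [interior_Ioi] at hx
    rw [(hasDerivAt_QQ hx).deriv]
    apply div_neg_of_neg_of_pos _ (pow_pos (Dpos hx) 2)
    have hI : 0 < II x := II_pos hx
    have hkey := key hx
    have hE : Real.exp (2 * x ^ 2) = Real.exp (x ^ 2) ^ 2 := by
      rw [← Real.exp_nat_mul]; ring_nf
    have hEpos := Real.exp_pos (x ^ 2)
    have hEm : Real.exp (-(x ^ 2)) = 1 / Real.exp (x ^ 2) := by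
      rw [Real.exp_neg]; exact inv_eq_one_div _
    rw [hE]
    set E := Real.exp (x ^ 2) with hEdef
    have h := mul_lt_mul_of_pos_left hkey
      (show (0:ℝ) < 4 * II x * E ^ 2 by positivity)
    rw [hEm] at h
    have h2 : 4 * II x * E ^ 2 * (E - 1 / E) = 4 * II x * E * (E ^ 2 - 1) := by
      field_simp
    rw [h2] at h
    nlinarith [h]

lemma exp_sub_one_le {x : ℝ} (hx : 0 ≤ x) : Real.exp x - 1 ≤ x * Real.exp x := by
  have h1 := Real.add_one_le_exp (-x)
  have h2 : Real.exp (-x) * Real.exp x = 1 := by rw [← Real.exp_add]; simp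
  nlinarith [mul_le_mul_of_nonneg_right h1 (Real.exp_pos x).le]

lemma QQ_lower {t : ℝ} (ht : 0 < t) : Real.exp (-(2 * t ^ 2)) ≤ QQ t := by
  unfold QQ
  rw [le_div_iff₀ (Dpos ht)]
  have hD : Real.exp (2 * t ^ 2) - 1 ≤ 2 * t ^ 2 * Real.exp (2 * t ^ 2) :=
    exp_sub_one_le (by positivity)
  have hinv : Real.exp (-(2 * t ^ 2)) * Real.exp (2 * t ^ 2) = 1 := by
    rw [← Real.exp_add]; simp
  have hI := II_ge ht.le
  have hpos := Real.exp_pos (-(2 * t ^ 2))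
  nlinarith [mul_le_mul_of_nonneg_left hD hpos.le,
    mul_le_mul hI hI ht.le (II_pos ht).le]

lemma QQ_upper {t : ℝ} (ht : 0 < t) : QQ t ≤ Real.exp (2 * t ^ 2) := by
  unfold QQ
  rw [div_le_iff₀ (Dpos ht)]
  have hD : 2 * t ^ 2 ≤ Real.exp (2 * t ^ 2) - 1 := by
    nlinarith [Real.add_one_le_exp (2 * t ^ 2)]
  have hE : Real.exp (2 * t ^ 2) = Real.exp (t ^ 2) ^ 2 := by
    rw [← Real.exp_nat_mul]; ring_nf
  have hIle := II_le ht.le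
  have hsq : II t ^ 2 ≤ (t * Real.exp (t ^ 2)) ^ 2 := by
    apply pow_le_pow_left₀ (II_pos ht).le hIle
  have hEpos := Real.exp_pos (2 * t ^ 2)
  nlinarith [mul_le_mul_of_nonneg_left hD hEpos.le]

lemma P_eq_QQ {Δ : ℝ} (h0 : 0 < Δ) (h1 : Δ < 1) :
    2 * (1 - Δ) ^ 2 *
      (∫ u in (0:ℝ)..Real.sqrt (Real.log (1 / (1 - Δ))), Real.exp (u ^ 2)) ^ 2 /
      (Δ * (2 - Δ)) = QQ (Real.sqrt (Real.log (1 / (1 - Δ)))) := by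
  have h1Δ : 0 < 1 - Δ := by linarith
  set t := Real.sqrt (Real.log (1 / (1 - Δ))) with htdef
  have hlog : 0 ≤ Real.log (1 / (1 - Δ)) :=
    Real.log_nonneg (by rw [le_div_iff₀ h1Δ]; linarith)
  have ht2 : t ^ 2 = Real.log (1 / (1 - Δ)) := Real.sq_sqrt hlog
  have hexp : Real.exp (t ^ 2) = 1 / (1 - Δ) := by
    rw [ht2, Real.exp_log (by positivity)]
  have hD : Real.exp (2 * t ^ 2) - 1 = Δ * (2 - Δ) / (1 - Δ) ^ 2 := by
    rw [two_mul, Real.exp_add, hexp]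
    field_simp
    ring
  unfold QQ II
  rw [hD]
  have hΔ2 : 0 < 2 - Δ := by linarith
  have hne1 : (1 - Δ) ≠ 0 := h1Δ.ne'
  have hne2 : Δ ≠ 0 := h0.ne'
  have hne3 : (2 - Δ) ≠ 0 := hΔ2.ne'
  rw [div_div_eq_mul_div]
  field_simp
open Real in
theorem P_strictly_decreasing
    (P : ℝ → ℝ)
    (hP : ∀ Δ, P Δ = 2 * (1 - Δ) ^ 2 *
      (∫ u in (0:ℝ)..Real.sqrt (Real.log (1 / (1 - Δ))), Real.exp (u ^ 2)) ^ 2 /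
      (Δ * (2 - Δ)))
    (erfi : ℝ → ℝ)
    (herfi : ∀ z, erfi z = 2 / Real.sqrt Real.pi * ∫ v in (0:ℝ)..z, Real.exp (v ^ 2)) :
    StrictAntiOn P (Set.Ioc 0 (1 / 2)) ∧
    Filter.Tendsto P (nhdsWithin 0 (Set.Ioi 0)) (nhds 1) ∧
    P (1 / 2) = Real.pi / 6 * erfi (Real.sqrt (Real.log 2)) ^ 2 := by
  -- common facts
  have htpos : ∀ {Δ : ℝ}, 0 < Δ → Δ < 1 → 0 < Real.sqrt (Real.log (1 / (1 - Δ))) := by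
    intro Δ h0 h1
    apply Real.sqrt_pos.mpr
    apply Real.log_pos
    rw [lt_div_iff₀ (by linarith : (0:ℝ) < 1 - Δ)]
    linarith
  have ht2 : ∀ {Δ : ℝ}, 0 < Δ → Δ < 1 →
      Real.sqrt (Real.log (1 / (1 - Δ))) ^ 2 = Real.log (1 / (1 - Δ)) := by
    intro Δ h0 h1
    apply Real.sq_sqrt
    apply Real.log_nonneg
    rw [le_div_iff₀ (by linarith : (0:ℝ) < 1 - Δ)]
    linarith
  refine ⟨?_, ?_, ?_⟩
  · -- strict antitonicity
    intro a ha b hb hab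
    obtain ⟨ha0, ha2⟩ := ha
    obtain ⟨hb0, hb2⟩ := hb
    have ha : (0:ℝ) < a ∧ a ≤ 1/2 := ⟨ha0, ha2⟩
    have hb : (0:ℝ) < b ∧ b ≤ 1/2 := ⟨hb0, hb2⟩
    have ha1 : a < 1 := lt_of_le_of_lt ha.2 (by norm_num)
    have hb1 : b < 1 := lt_of_le_of_lt hb.2 (by norm_num)
    rw [hP a, hP b, P_eq_QQ ha.1 ha1, P_eq_QQ hb.1 hb1]
    apply QQ_strictAnti (Set.mem_Ioi.mpr (htpos ha.1 ha1)) (Set.mem_Ioi.mpr (htpos hb.1 hb1))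
    apply Real.sqrt_lt_sqrt
    · apply Real.log_nonneg
      rw [le_div_iff₀ (by linarith : (0:ℝ) < 1 - a)]
      linarith
    · apply Real.log_lt_log (one_div_pos.mpr (by linarith))
      exact one_div_lt_one_div_of_lt (by linarith) (by linarith)
  · -- limit at 0⁺
    have hev : ∀ᶠ Δ in nhdsWithin (0:ℝ) (Set.Ioi 0), Δ ∈ Set.Ioc (0:ℝ) (1/2) :=
      Ioc_mem_nhdsGT (by norm_num)
    have hL : Filter.Tendsto (fun Δ : ℝ => Real.log (1 / (1 - Δ)))
        (nhdsWithin 0 (Set.Ioi 0)) (nhds 0) := by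
      have hc : ContinuousAt (fun Δ : ℝ => Real.log (1 / (1 - Δ))) 0 := by
        apply ContinuousAt.log
        · exact (continuousAt_const.div (by fun_prop) (by norm_num))
        · norm_num
      have := hc.tendsto.mono_left (nhdsWithin_le_nhds (s := Set.Ioi (0:ℝ)))
      simpa using this
    have hlow : Filter.Tendsto (fun Δ : ℝ => Real.exp (-(2 * Real.log (1 / (1 - Δ)))))
        (nhdsWithin 0 (Set.Ioi 0)) (nhds 1) := by
      have h2 : Filter.Tendsto (fun Δ : ℝ => -(2 * Real.log (1 / (1 - Δ))))
          (nhdsWithin 0 (Set.Ioi 0)) (nhds 0) := by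
        simpa using (hL.const_mul 2).neg
      simpa [Function.comp_def] using (Real.continuous_exp.tendsto 0).comp h2
    have hup : Filter.Tendsto (fun Δ : ℝ => Real.exp (2 * Real.log (1 / (1 - Δ))))
        (nhdsWithin 0 (Set.Ioi 0)) (nhds 1) := by
      have h2 : Filter.Tendsto (fun Δ : ℝ => 2 * Real.log (1 / (1 - Δ)))
          (nhdsWithin 0 (Set.Ioi 0)) (nhds 0) := by
        simpa using hL.const_mul 2
      simpa [Function.comp_def] using (Real.continuous_exp.tendsto 0).comp h2
    apply tendsto_of_tendsto_of_tendsto_of_le_of_le' hlow hup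
    · filter_upwards [hev] with Δ hΔ
      have h1 : Δ < 1 := lt_of_le_of_lt hΔ.2 (by norm_num)
      rw [hP, P_eq_QQ hΔ.1 h1]
      have := QQ_lower (htpos hΔ.1 h1)
      rwa [ht2 hΔ.1 h1] at this
    · filter_upwards [hev] with Δ hΔ
      have h1 : Δ < 1 := lt_of_le_of_lt hΔ.2 (by norm_num)
      rw [hP, P_eq_QQ hΔ.1 h1]
      have := QQ_upper (htpos hΔ.1 h1)
      rwa [ht2 hΔ.1 h1] at this
  · -- value at 1/2
    rw [hP, herfi]
    have h2 : (1:ℝ) / (1 - 1/2) = 2 := by norm_num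
    rw [h2]
    have hπ : Real.sqrt Real.pi ≠ 0 := ne_of_gt (Real.sqrt_pos.mpr Real.pi_pos)
    have hsq : Real.sqrt Real.pi ^ 2 = Real.pi := Real.sq_sqrt Real.pi_pos.le
    rw [mul_pow, div_pow, hsq]
    field_simp
    ring
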